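/- Every countable finite-by-abelian group is generated by finitely many abelian subgroups. -/

import Mathlib

open Subgroup
open scoped commutatorElement

namespace FBA

variable {D : Type*} [Group D]

/-- central commutator identities -/
lemma comm_mul_left (hc : ∀ x y g : D, g * ⁅x,y⁆ = ⁅x,y⁆ * g) (a b c : D) :
    ⁅a * b, c⁆ = ⁅a, c⁆ * ⁅b, c⁆ := by
  have h1 : ⁅a * b, c⁆ = a * ⁅b, c⁆ * c * a⁻¹ * c⁻¹ := by
    simp only [commutatorElement_def]; group
  rw [h1, hc b c a]
  have h2 : ⁅b, c⁆ * a * c * a⁻¹ * c⁻¹ = ⁅b, c⁆ * ⁅a, c⁆ := by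
    simp only [commutatorElement_def]; group
  rw [h2, hc a c ⁅b, c⁆]

lemma comm_mul_right (hc : ∀ x y g : D, g * ⁅x,y⁆ = ⁅x,y⁆ * g) (a b c : D) :
    ⁅a, b * c⁆ = ⁅a, b⁆ * ⁅a, c⁆ := by
  rw [← commutatorElement_inv (b*c) a, comm_mul_left hc b c a, mul_inv_rev,
    commutatorElement_inv, commutatorElement_inv, hc a c ⁅a, b⁆]

lemma comm_pow_left (hc : ∀ x y g : D, g * ⁅x,y⁆ = ⁅x,y⁆ * g) (a c : D) (n : ℕ) :
    ⁅a ^ n, c⁆ = ⁅a, c⁆ ^ n := by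
  induction n with
  | zero => simp
  | succ n ih => rw [pow_succ, comm_mul_left hc, ih, pow_succ]

lemma comm_pow_right (hc : ∀ x y g : D, g * ⁅x,y⁆ = ⁅x,y⁆ * g) (a c : D) (n : ℕ) :
    ⁅a, c ^ n⁆ = ⁅a, c⁆ ^ n := by
  induction n with
  | zero => simp
  | succ n ih => rw [pow_succ, comm_mul_right hc, ih, pow_succ]

/-- pair relation: all four cross commutes -/
def R : D × D → D × D → Prop := fun u v =>
  Commute u.1 v.1 ∧ Commute u.2 v.2 ∧ Commute u.1 v.2 ∧ Commute u.2 v.1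

lemma R_symm : Symmetric (R (D := D)) := fun _ _ h => ⟨h.1.symm, h.2.1.symm, h.2.2.2.symm, h.2.2.1.symm⟩

def Good (z : D) (l : List (D × D)) : Prop :=
  (∀ u ∈ l, ⁅u.1, u.2⁆ = z) ∧ l.Pairwise R

def pts (l : List (D × D)) : Set D := {x | ∃ u ∈ l, x = u.1 ∨ x = u.2}

omit [Group D] in
lemma pts_mono {l l' : List (D × D)} (h : l ⊆ l') : pts l ⊆ pts l' :=
  fun _ ⟨u, hu, hx⟩ => ⟨u, h hu, hx⟩

lemma commute_closure {g : D} {s : Set D} (h : ∀ x ∈ s, Commute g x) :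
    ∀ h' ∈ closure s, Commute g h' := by
  intro h' hh'
  have : closure s ≤ centralizer {g} := by
    apply closure_le _ |>.mpr
    intro x hx
    rw [SetLike.mem_coe, mem_centralizer_singleton_iff]
    exact (h x hx).symm
  have hmem := this hh'
  rw [mem_centralizer_singleton_iff] at hmem
  exact hmem.symm

lemma closure_isCommutative {s : Set D} (h : ∀ x ∈ s, ∀ y ∈ s, x * y = y * x) :
    IsMulCommutative (closure s) := by
  refine ⟨⟨fun a b => Subtype.ext ?_⟩⟩
  have hsub := Subgroup.closure_le_centralizer_centralizer s
  exact Set.centralizer_centralizer_comm_of_comm h _ (hsub a.2) _ (hsub b.2)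

section Crux

variable {D : Type*} [Group D] {p : ℕ}

def Epow (z : D) (m : ZMod p) : D := z ^ m.val

variable {z : D}

lemma Epow_add (hp : 0 < p) (hord : orderOf z = p) (m n : ZMod p) :
    Epow z (m + n) = Epow z m * Epow z n := by
  haveI : NeZero p := ⟨hp.ne'⟩
  have h := pow_mod_orderOf z (m.val + n.val)
  rw [hord] at h
  rw [Epow, Epow, Epow, ZMod.val_add, h, pow_add]

lemma Epow_inj (hp : 0 < p) (hord : orderOf z = p) {m n : ZMod p}
    (h : Epow z m = Epow z n) : m = n := by
  haveI : NeZero p := ⟨hp.ne'⟩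
  have h1 : m.val ∈ Set.Iio (orderOf z) := by rw [hord]; exact m.val_lt
  have h2 : n.val ∈ Set.Iio (orderOf z) := by rw [hord]; exact n.val_lt
  exact ZMod.val_injective p (pow_injOn_Iio_orderOf h1 h2 h)

lemma Epow_zero : Epow z (0 : ZMod p) = 1 := by
  rw [Epow, ZMod.val_zero, pow_zero]

lemma Epow_one (hp1 : 1 < p) : Epow z (1 : ZMod p) = z := by
  haveI : Fact (1 < p) := ⟨hp1⟩
  rw [Epow, ZMod.val_one, pow_one]

end Crux

theorem crux {D : Type*} [Group D] [Countable D] {p : ℕ} (hp : p.Prime) {z : D}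
    (hzc : ∀ g : D, g * z = z * g) (hord : orderOf z = p)
    (hcomm : ∀ x y : D, ∃ k : ℕ, ⁅x, y⁆ = z ^ k) :
    ∃ A B : Subgroup D, IsMulCommutative A ∧ IsMulCommutative B ∧ A ⊔ B = ⊤ := by
  haveI : Fact p.Prime := ⟨hp⟩
  have hp0 : 0 < p := hp.pos
  have hp1 : 1 < p := hp.one_lt
  haveI : NeZero p := ⟨hp0.ne'⟩
  -- commutators are central
  have hc : ∀ x y g : D, g * ⁅x, y⁆ = ⁅x, y⁆ * g := by
    intro x y g
    obtain ⟨k, hk⟩ := hcomm x y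
    rw [hk]; clear hk
    induction k with
    | zero => simp
    | succ n ih => rw [pow_succ, ← mul_assoc, ih, mul_assoc, hzc g, ← mul_assoc]
  -- exponent map
  have hE : ∀ x y : D, ∃ m : ZMod p, ⁅x, y⁆ = Epow z m := by
    intro x y
    obtain ⟨k, hk⟩ := hcomm x y
    refine ⟨(k : ZMod p), ?_⟩
    rw [hk, Epow, ZMod.val_natCast]
    have h := pow_mod_orderOf z k
    rw [hord] at h
    exact h.symm
  choose β hβ using hE
  have hβinj : ∀ {m n : ZMod p}, Epow z m = Epow z n → m = n :=
    fun {m n} h => Epow_inj hp0 hord h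
  have hβ0 : ∀ x y : D, β x y = 0 ↔ Commute x y := by
    intro x y
    rw [← commutatorElement_eq_one_iff_commute, hβ x y]
    constructor
    · intro h; rw [h, Epow_zero]
    · intro h; exact hβinj (h.trans Epow_zero.symm)
  have hβadd1 : ∀ x y w : D, β (x * y) w = β x w + β y w := by
    intro x y w
    apply hβinj
    rw [← hβ, Epow_add hp0 hord, ← hβ, ← hβ, comm_mul_left hc]
  have hβadd2 : ∀ x y w : D, β x (y * w) = β x y + β x w := by
    intro x y w
    apply hβinj
    rw [← hβ, Epow_add hp0 hord, ← hβ, ← hβ, comm_mul_right hc]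
  have hβone : ∀ w : D, β 1 w = 0 := by
    intro w; exact (hβ0 _ _).mpr (Commute.one_left w)
  have hβone2 : ∀ w : D, β w 1 = 0 := by
    intro w; exact (hβ0 _ _).mpr (Commute.one_right w)
  have hβpow1 : ∀ (x w : D) (n : ℕ), β (x ^ n) w = (n : ZMod p) * β x w := by
    intro x w n
    induction n with
    | zero => rw [pow_zero, hβone]; simp
    | succ n ih => rw [pow_succ, hβadd1, ih]; push_cast; ring
  have hβpow2 : ∀ (x w : D) (n : ℕ), β x (w ^ n) = (n : ZMod p) * β x w := by
    intro x w n
    induction n with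
    | zero => rw [pow_zero, hβone2]; simp
    | succ n ih => rw [pow_succ, hβadd2, ih]; push_cast; ring
  have hβskew : ∀ x y : D, β y x = - β x y := by
    intro x y
    have h1 : Epow z (β x y + β y x) = 1 := by
      rw [Epow_add hp0 hord, ← hβ, ← hβ, ← commutatorElement_inv x y, mul_inv_cancel]
    have h0 : β x y + β y x = 0 := hβinj (h1.trans Epow_zero.symm)
    linear_combination h0
  have hvalcast : ∀ m : ZMod p, ((m.val : ℕ) : ZMod p) = m := by
    intro m; rw [ZMod.natCast_val, ZMod.cast_id]
  -- orthogonalization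
  have horth : ∀ l : List (D × D), Good z l → ∀ d : D,
      ∃ c ∈ closure (pts l), ∀ x ∈ pts l, Commute (d * c) x := by
    intro l
    induction l with
    | nil =>
      intro _ d
      refine ⟨1, one_mem _, ?_⟩
      rintro x ⟨u, hu, -⟩
      exact absurd hu (List.not_mem_nil)
    | cons u t ih =>
      intro hg d
      have hgt : Good z t :=
        ⟨fun v hv => hg.1 v (List.mem_cons_of_mem u hv), (List.pairwise_cons.mp hg.2).2⟩
      have hRut : ∀ v ∈ t, R u v := (List.pairwise_cons.mp hg.2).1
      obtain ⟨c₁, hc₁, hcomm₁⟩ := ih hgt d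
      have hβu : β u.1 u.2 = 1 := by
        apply hβinj; rw [← hβ, hg.1 u (List.mem_cons_self), Epow_one hp1]
      have hu1 : u.1 ∈ pts (u :: t) := ⟨u, List.mem_cons_self, Or.inl rfl⟩
      have hu2 : u.2 ∈ pts (u :: t) := ⟨u, List.mem_cons_self, Or.inr rfl⟩
      have hsub : pts t ⊆ pts (u :: t) := pts_mono (List.subset_cons_self _ _)
      refine ⟨c₁ * u.1 ^ (- β (d * c₁) u.2).val * u.2 ^ (β (d * c₁) u.1).val, ?_, ?_⟩
      · exact mul_mem (mul_mem (closure_mono hsub hc₁) (pow_mem (subset_closure hu1) _))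
          (pow_mem (subset_closure hu2) _)
      · intro x hx
        have hkey : β (d * (c₁ * u.1 ^ (- β (d * c₁) u.2).val * u.2 ^ (β (d * c₁) u.1).val)) x
            = β (d * c₁) x + (- β (d * c₁) u.2) * β u.1 x + (β (d * c₁) u.1) * β u.2 x := by
          have h1 : d * (c₁ * u.1 ^ (- β (d * c₁) u.2).val * u.2 ^ (β (d * c₁) u.1).val)
              = ((d * c₁) * u.1 ^ (- β (d * c₁) u.2).val) * u.2 ^ (β (d * c₁) u.1).val := by
            group
          rw [h1, hβadd1, hβadd1, hβpow1, hβpow1, hvalcast, hvalcast]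
        apply (hβ0 _ _).mp
        rw [hkey]
        rcases hx with ⟨v, hv, hxv⟩
        rcases List.mem_cons.mp hv with rfl | hvt
        · rcases hxv with h | h
          · subst h
            have h11 : β v.1 v.1 = 0 := (hβ0 _ _).mpr (Commute.refl _)
            have h21 : β v.2 v.1 = -1 := by rw [hβskew, hβu]
            rw [h11, h21]; ring
          · subst h
            have h22 : β v.2 v.2 = 0 := (hβ0 _ _).mpr (Commute.refl _)
            rw [hβu, h22]; ring
        · have hxt : x ∈ pts t := ⟨v, hvt, hxv⟩
          have h₁ : β (d * c₁) x = 0 := (hβ0 _ _).mpr (hcomm₁ x hxt)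
          have hR := hRut v hvt
          have h₂ : β u.1 x = 0 := by
            rcases hxv with h | h
            · subst h; exact (hβ0 _ _).mpr hR.1
            · subst h; exact (hβ0 _ _).mpr hR.2.2.1
          have h₃ : β u.2 x = 0 := by
            rcases hxv with h | h
            · subst h; exact (hβ0 _ _).mpr hR.2.2.2
            · subst h; exact (hβ0 _ _).mpr hR.2.1
          rw [h₁, h₂, h₃]; ring
  -- the one-step extension
  have hstep : ∀ l : List (D × D), Good z l → ∀ d : D,
      ∃ l', l ⊆ l' ∧ Good z l' ∧ d ∈ closure (pts l' ∪ (Subgroup.center D : Set D)) := by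
    intro l hg d
    obtain ⟨c, hcmem, hcomm'⟩ := horth l hg d
    have hcl : closure (pts l) ≤ closure (pts l ∪ (Subgroup.center D : Set D)) :=
      closure_mono Set.subset_union_left
    by_cases hcen : ∀ e : D, Commute (d * c) e
    · refine ⟨l, fun x hx => hx, hg, ?_⟩
      have hd' : d * c ∈ Subgroup.center D := Subgroup.mem_center_iff.mpr fun g => (hcen g).symm.eq
      have h1 : d * c ∈ closure (pts l ∪ (Subgroup.center D : Set D)) :=
        subset_closure (Or.inr hd')
      have h2 : c ∈ closure (pts l ∪ (Subgroup.center D : Set D)) := hcl hcmem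
      simpa using mul_mem h1 (inv_mem h2)
    · push_neg at hcen
      obtain ⟨e, he⟩ := hcen
      obtain ⟨c₂, hc₂mem, hcomm₂⟩ := horth l hg e
      -- d' := d * c, e' := e * c₂
      have hdc₂ : Commute (d * c) c₂ := by
        have := commute_closure (s := pts l) (g := d * c) hcomm' c₂ hc₂mem
        exact this
      have hs : β (d * c) (e * c₂) ≠ 0 := by
        intro h0
        have hcom : Commute (d * c) (e * c₂) := (hβ0 _ _).mp h0
        have : Commute (d * c) e := by
          have h2 : Commute (d * c) ((e * c₂) * c₂⁻¹) := hcom.mul_right hdc₂.inv_right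
          simpa using h2
        exact he this
      set s : ZMod p := β (d * c) (e * c₂) with hsdef
      set b' : D := (e * c₂) ^ (s⁻¹.val) with hb'def
      have hβb' : β (d * c) b' = 1 := by
        rw [hb'def, hβpow2, hvalcast, inv_mul_cancel₀ hs]
      refine ⟨l ++ [(d * c, b')], List.subset_append_left _ _, ⟨?_, ?_⟩, ?_⟩
      · intro v hv
        rcases List.mem_append.mp hv with h | h
        · exact hg.1 v h
        · rcases List.mem_singleton.mp h with rfl
          show ⁅d * c, b'⁆ = z
          rw [hβ (d * c) b', hβb', Epow_one hp1]
      · rw [List.pairwise_append]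
        refine ⟨hg.2, List.pairwise_singleton _ _, ?_⟩
        intro v hv w hw
        rcases List.mem_singleton.mp hw with rfl
        have hv1 : v.1 ∈ pts l := ⟨v, hv, Or.inl rfl⟩
        have hv2 : v.2 ∈ pts l := ⟨v, hv, Or.inr rfl⟩
        have hce' : ∀ x ∈ pts l, Commute x b' := by
          intro x hx
          exact ((hcomm₂ x hx).symm).pow_right _
        exact ⟨(hcomm' v.1 hv1).symm, hce' v.2 hv2, hce' v.1 hv1, (hcomm' v.2 hv2).symm⟩
      · have hmem1 : d * c ∈ pts (l ++ [(d * c, b')]) :=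
          ⟨(d * c, b'), List.mem_append_right _ (List.mem_singleton_self _), Or.inl rfl⟩
        have h1 : d * c ∈ closure (pts (l ++ [(d * c, b')]) ∪ (Subgroup.center D : Set D)) :=
          subset_closure (Or.inl hmem1)
        have h2 : c ∈ closure (pts (l ++ [(d * c, b')]) ∪ (Subgroup.center D : Set D)) :=
          Subgroup.closure_mono
            (Set.union_subset_union_left _ (pts_mono (List.subset_append_left _ _))) (hcl hcmem)
        simpa using mul_mem h1 (inv_mem h2)
  -- build the sequence
  obtain ⟨f, hf⟩ := exists_surjective_nat D
  choose stp hsub hgood hmem using hstep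
  let seq : ℕ → {l : List (D × D) // Good z l} := fun n =>
    Nat.rec ⟨[], by constructor <;> simp [Good]⟩
      (fun n ih => ⟨stp ih.1 ih.2 (f n), hgood ih.1 ih.2 (f n)⟩) n
  have hseq : ∀ n, (seq (n + 1)).1 = stp (seq n).1 (seq n).2 (f n) := fun n => rfl
  have hmono : ∀ n m, n ≤ m → (seq n).1 ⊆ (seq m).1 := by
    intro n m h
    induction m, h using Nat.le_induction with
    | base => exact fun x hx => hx
    | succ m hnm ih =>
      intro x hx
      rw [hseq m]
      exact hsub (seq m).1 (seq m).2 (f m) (ih hx)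
  -- the two subgroups
  set sA : Set D := {x | ∃ n, ∃ u ∈ (seq n).1, x = u.1} ∪ (Subgroup.center D : Set D) with hsA
  set sB : Set D := {x | ∃ n, ∃ u ∈ (seq n).1, x = u.2} with hsB
  have hcommA : ∀ x ∈ sA, ∀ y ∈ sA, x * y = y * x := by
    rintro x (⟨n, u, hu, rfl⟩ | hx) y hy
    · rcases hy with ⟨m, v, hv, rfl⟩ | hy
      · have hu' : u ∈ (seq (max n m)).1 := hmono n _ (le_max_left n m) hu
        have hv' : v ∈ (seq (max n m)).1 := hmono m _ (le_max_right n m) hv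
        by_cases huv : u = v
        · subst huv; rfl
        · exact (haveI : Std.Symm (R (D := D)) := ⟨fun _ _ h => R_symm h⟩; List.Pairwise.forall (seq (max n m)).2.2 hu' hv' huv).1
      · exact Subgroup.mem_center_iff.mp hy u.1
    · exact (Subgroup.mem_center_iff.mp hx y).symm
  have hcommB : ∀ x ∈ sB, ∀ y ∈ sB, x * y = y * x := by
    rintro x ⟨n, u, hu, rfl⟩ y ⟨m, v, hv, rfl⟩
    have hu' : u ∈ (seq (max n m)).1 := hmono n _ (le_max_left n m) hu
    have hv' : v ∈ (seq (max n m)).1 := hmono m _ (le_max_right n m) hv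
    by_cases huv : u = v
    · subst huv; rfl
    · exact (haveI : Std.Symm (R (D := D)) := ⟨fun _ _ h => R_symm h⟩; List.Pairwise.forall (seq (max n m)).2.2 hu' hv' huv).2.1
  refine ⟨closure sA, closure sB, ?_, ?_, ?_⟩
  · exact closure_isCommutative hcommA
  · exact closure_isCommutative hcommB
  · rw [eq_top_iff']
    intro g
    obtain ⟨n, rfl⟩ := hf g
    have h1 : f n ∈ closure (pts (seq (n + 1)).1 ∪ (Subgroup.center D : Set D)) := by
      rw [hseq n]
      exact hmem (seq n).1 (seq n).2 (f n)
    have h2 : closure (pts (seq (n + 1)).1 ∪ (Subgroup.center D : Set D))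
        ≤ closure sA ⊔ closure sB := by
      apply closure_le _ |>.mpr
      rintro x (⟨u, hu, hx⟩ | hx)
      · rcases hx with rfl | rfl
        · have hm : u.1 ∈ sA := by rw [hsA]; exact Or.inl ⟨n + 1, u, hu, rfl⟩
          exact SetLike.le_def.mp le_sup_left (subset_closure hm)
        · have hm : u.2 ∈ sB := by rw [hsB]; exact ⟨n + 1, u, hu, rfl⟩
          exact SetLike.le_def.mp le_sup_right (subset_closure hm)
      · have hm : x ∈ sA := by rw [hsA]; exact Or.inr hx
        exact SetLike.le_def.mp le_sup_left (subset_closure hm)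
    exact h2 h1

def P (G : Type u) [Group G] : Prop :=
  ∃ (ι : Type) (_ : Finite ι) (A : ι → Subgroup G),
    (∀ i, IsMulCommutative (A i)) ∧ (⨆ i, A i) = ⊤

lemma bot_isCommutative {G : Type*} [Group G] : IsMulCommutative (⊥ : Subgroup G) := by
  refine ⟨⟨fun a b => Subtype.ext ?_⟩⟩
  have ha := Subgroup.mem_bot.mp a.2
  have hb := Subgroup.mem_bot.mp b.2
  show (a : G) * b = b * a
  rw [ha, hb]

lemma abelian_gen (n : ℕ) : ∀ (D : Type u) [Group D] [Countable D],
    Finite (commutator D) → Nat.card (commutator D) ≤ n → commutator D ≤ Subgroup.center D →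
    P D := by
  induction n with
  | zero =>
    intro D _ _ hfin hcard _
    have : 0 < Nat.card (commutator D) := Nat.card_pos
    omega
  | succ n IH =>
    intro D _ _ hfin hcard hcen
    by_cases habel : ∀ x y : D, Commute x y
    · refine ⟨PUnit, inferInstance, fun _ => ⊤, fun _ => ⟨⟨fun a b => Subtype.ext (habel a b)⟩⟩, ?_⟩
      rw [iSup_const]
    · push_neg at habel
      obtain ⟨x, y, hxy⟩ := habel
      have hc1 : ⁅x, y⁆ ≠ 1 := by rwa [Ne, commutatorElement_eq_one_iff_commute]
      have hcmem : ⁅x, y⁆ ∈ commutator D :=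
        Subgroup.commutator_mem_commutator (Subgroup.mem_top x) (Subgroup.mem_top y)
      have ho0 : orderOf ⁅x, y⁆ ≠ 0 := by
        have h1 : orderOf (⟨⁅x, y⁆, hcmem⟩ : ↥(commutator D)) ≠ 0 := by
          have := orderOf_pos (⟨⁅x, y⁆, hcmem⟩ : ↥(commutator D))
          omega
        rw [← Subgroup.orderOf_mk ⁅x, y⁆ hcmem]
        exact h1
      have ho1 : orderOf ⁅x, y⁆ ≠ 1 := by
        rw [Ne, orderOf_eq_one_iff]; exact hc1
      obtain ⟨p, hp, hpd⟩ := Nat.exists_prime_and_dvd ho1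
      set z := ⁅x, y⁆ ^ (orderOf ⁅x, y⁆ / p) with hzdef
      have hordz : orderOf z = p := orderOf_pow_orderOf_div ho0 hpd
      have hzmem : z ∈ commutator D := pow_mem hcmem _
      have hzcen : z ∈ Subgroup.center D := hcen hzmem
      have hz1 : z ≠ 1 := by
        intro h
        rw [h, orderOf_one] at hordz
        exact hp.one_lt.ne' hordz.symm
      set Z : Subgroup D := Subgroup.zpowers z with hZdef
      have hZle : Z ≤ Subgroup.center D := by
        rw [hZdef, Subgroup.zpowers_le]; exact hzcen
      haveI hZnormal : Z.Normal := by
        constructor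
        intro a ha g
        have hag : g * a = a * g := Subgroup.mem_center_iff.mp (hZle ha) g
        rw [hag, mul_inv_cancel_right]
        exact ha
      set mk := QuotientGroup.mk' Z with hmkdef
      have hmksurj : Function.Surjective mk := QuotientGroup.mk'_surjective Z
      have hcommQ : commutator (D ⧸ Z) = Subgroup.map mk (commutator D) := by
        have h1 := Subgroup.map_commutator (⊤ : Subgroup D) ⊤ mk
        rw [Subgroup.map_top_of_surjective _ hmksurj] at h1
        rw [_root_.commutator_def, _root_.commutator_def, ← h1]
      haveI hfinQ : Finite (commutator (D ⧸ Z)) := by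
        rw [hcommQ]
        have h1 : ((commutator D : Set D)).Finite := Set.toFinite _
        have h2 : ((mk '' (commutator D : Set D)) : Set (D ⧸ Z)).Finite := h1.image _
        rw [← Subgroup.coe_map] at h2
        exact h2.to_subtype
      -- surjection between commutators
      have hφ : ∀ x : ↥(commutator D), mk x.1 ∈ commutator (D ⧸ Z) := by
        intro x
        rw [hcommQ]
        exact Subgroup.mem_map_of_mem mk x.2
      set φ : ↥(commutator D) → ↥(commutator (D ⧸ Z)) := fun x => ⟨mk x.1, hφ x⟩ with hφdef
      have hφsurj : Function.Surjective φ := by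
        rintro ⟨q, hq⟩
        rw [hcommQ] at hq
        obtain ⟨w, hw, rfl⟩ := hq
        exact ⟨⟨w, hw⟩, rfl⟩
      have hle : Nat.card (commutator (D ⧸ Z)) ≤ Nat.card (commutator D) :=
        Nat.card_le_card_of_surjective φ hφsurj
      have hne : Nat.card (commutator (D ⧸ Z)) ≠ Nat.card (commutator D) := by
        intro heq
        have hbij : Function.Bijective φ :=
          (Nat.bijective_iff_surjective_and_card φ).mpr ⟨hφsurj, heq.symm⟩
        have h1 : φ ⟨z, hzmem⟩ = φ ⟨1, one_mem _⟩ := by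
          apply Subtype.ext
          show mk z = mk 1
          rw [map_one]
          exact (QuotientGroup.eq_one_iff z).mpr (Subgroup.mem_zpowers z)
        have := hbij.injective h1
        rw [Subtype.ext_iff] at this
        exact hz1 this
      have hcardQ : Nat.card (commutator (D ⧸ Z)) ≤ n := by
        have := lt_of_le_of_ne hle hne
        omega
      have hcenQ : commutator (D ⧸ Z) ≤ Subgroup.center (D ⧸ Z) := by
        rw [hcommQ]
        rintro q ⟨w, hw, rfl⟩
        rw [Subgroup.mem_center_iff]
        intro g'
        obtain ⟨g, rfl⟩ := hmksurj g'
        rw [← map_mul, ← map_mul, Subgroup.mem_center_iff.mp (hcen hw) g]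
      haveI : Countable (D ⧸ Z) := Quotient.countable
      obtain ⟨ι, hι, B, hBcomm, hBsup⟩ := IH (D ⧸ Z) hfinQ hcardQ hcenQ
      -- add ⊥ to the family to ensure nonempty index
      set B' : ι ⊕ Unit → Subgroup (D ⧸ Z) := Sum.elim B (fun _ => ⊥) with hB'def
      have hB'comm : ∀ o, IsMulCommutative (B' o) := by
        rintro (i | u)
        · exact hBcomm i
        · exact bot_isCommutative
      have hB'sup : (⨆ o, B' o) = ⊤ := by
        apply le_antisymm le_top
        rw [← hBsup]
        exact iSup_le fun i => le_iSup B' (Sum.inl i)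
      set Dsub : ι ⊕ Unit → Subgroup D := fun o => Subgroup.comap mk (B' o) with hDsubdef
      have hkerle : ∀ o, Z ≤ Dsub o := by
        intro o w hw
        rw [hDsubdef]
        have : mk w = 1 := (QuotientGroup.eq_one_iff w).mpr hw
        rw [Subgroup.mem_comap, this]
        exact one_mem _
      have hzDsub : ∀ o, z ∈ Dsub o := fun o => hkerle o (Subgroup.mem_zpowers z)
      -- apply crux on each Dsub o
      have hcrux : ∀ o : ι ⊕ Unit, ∃ AB : Subgroup ↥(Dsub o) × Subgroup ↥(Dsub o),
          IsMulCommutative AB.1 ∧ IsMulCommutative AB.2 ∧ AB.1 ⊔ AB.2 = ⊤ := by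
        intro o
        set zi : ↥(Dsub o) := ⟨z, hzDsub o⟩ with hzidef
        have hzc : ∀ g : ↥(Dsub o), g * zi = zi * g := by
          intro g
          exact Subtype.ext (Subgroup.mem_center_iff.mp hzcen g.1)
        have hordzi : orderOf zi = p := by
          rw [hzidef, Subgroup.orderOf_mk]
          exact hordz
        have hcommzi : ∀ a b : ↥(Dsub o), ∃ k : ℕ, ⁅a, b⁆ = zi ^ k := by
          intro a b
          haveI := hB'comm o
          have hmka : mk a.1 ∈ B' o := Subgroup.mem_comap.mp a.2
          have hmkb : mk b.1 ∈ B' o := Subgroup.mem_comap.mp b.2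
          have hcm : Commute (mk a.1) (mk b.1) :=
            Subgroup.mul_comm_of_mem_isMulCommutative (B' o) hmka hmkb
          have h1 : mk ⁅a.1, b.1⁆ = 1 := by
            rw [map_commutatorElement]
            exact commutatorElement_eq_one_iff_commute.mpr hcm
          have h2 : ⁅a.1, b.1⁆ ∈ Z := (QuotientGroup.eq_one_iff _).mp h1
          obtain ⟨m, hm⟩ := Subgroup.mem_zpowers_iff.mp h2
          have hppos : (0 : ℤ) < (p : ℤ) := by exact_mod_cast hp.pos
          set k : ℕ := (m % (p : ℤ)).toNat with hkdef
          have hzk : z ^ k = ⁅a.1, b.1⁆ := by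
            have h3 : ((k : ℤ)) = m % (p : ℤ) :=
              Int.toNat_of_nonneg (Int.emod_nonneg m (by omega))
            have h4 : z ^ ((k : ℤ)) = z ^ m := by
              rw [h3, ← hordz]
              exact_mod_cast zpow_mod_orderOf z m
            rw [← hm, ← h4, zpow_natCast]
          refine ⟨k, ?_⟩
          apply Subtype.ext
          show ⁅a.1, b.1⁆ = zi.1 ^ k
          rw [← hzk]
        obtain ⟨A1, B1, h1, h2, h3⟩ := crux hp hzc hordzi hcommzi
        exact ⟨(A1, B1), h1, h2, h3⟩
      choose AB hA hB hABsup using hcrux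
      haveI := hι
      refine ⟨(ι ⊕ Unit) ⊕ (ι ⊕ Unit), by infer_instance,
        Sum.elim (fun o => (AB o).1.map (Dsub o).subtype)
          (fun o => (AB o).2.map (Dsub o).subtype), ?_, ?_⟩
      · rintro (o | o)
        · haveI := hA o
          exact Subgroup.map_isMulCommutative _ _
        · haveI := hB o
          exact Subgroup.map_isMulCommutative _ _
      · have hDo : ∀ o, ((AB o).1.map (Dsub o).subtype) ⊔ ((AB o).2.map (Dsub o).subtype)
            = Dsub o := by
          intro o
          rw [← Subgroup.map_sup, hABsup o, ← MonoidHom.range_eq_map, Subgroup.range_subtype]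
        have hsup1 : (⨆ j : (ι ⊕ Unit) ⊕ (ι ⊕ Unit), Sum.elim
            (fun o => (AB o).1.map (Dsub o).subtype)
            (fun o => (AB o).2.map (Dsub o).subtype) j) = ⨆ o, Dsub o := by
          rw [iSup_sum, ← iSup_sup_eq]
          simp only [Sum.elim_inl, Sum.elim_inr]
          exact iSup_congr hDo
        rw [hsup1]
        -- now show ⨆ o, Dsub o = ⊤
        have hmap : Subgroup.map mk (⨆ o, Dsub o) = ⊤ := by
          rw [(Subgroup.gc_map_comap mk).l_iSup]
          have : ∀ o, Subgroup.map mk (Dsub o) = B' o := by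
            intro o
            exact Subgroup.map_comap_eq_self_of_surjective hmksurj _
          rw [iSup_congr this, hB'sup]
        have hcm := Subgroup.comap_map_eq mk (⨆ o, Dsub o)
        rw [hmap, Subgroup.comap_top] at hcm
        have hker : mk.ker ≤ ⨆ o, Dsub o := by
          rw [QuotientGroup.ker_mk']
          exact le_trans (hkerle (Sum.inr ())) (le_iSup Dsub (Sum.inr ()))
        rw [sup_of_le_left hker] at hcm
        exact hcm.symm

end FBA

theorem countable_finite_by_abelian_gen_by_finitely_many_abelian
    {G : Type*} [Group G] [Countable G] (h : Finite (commutator G)) :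
    ∃ (n : ℕ) (A : Fin n → Subgroup G),
      (∀ i, IsMulCommutative (A i)) ∧ (⨆ i, A i) = ⊤ := by
  classical
  set φ : G →* MulAut ↥(commutator G) := MulAut.conjNormal with hφdef
  set C : Subgroup G := φ.ker with hCdef
  haveI hQfin : Finite (G ⧸ C) :=
    Finite.of_equiv _ (QuotientGroup.quotientKerEquivRange φ).symm.toEquiv
  have hCK : ∀ x ∈ C, ∀ k, ∀ hk : k ∈ commutator G, x * k = k * x := by
    intro x hx k hk
    have h1 : φ x = 1 := MonoidHom.mem_ker.mp hx
    have h2 : ((φ x) ⟨k, hk⟩ : G) = x * k * x⁻¹ := MulAut.conjNormal_apply x ⟨k, hk⟩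
    rw [h1] at h2
    simp only [MulAut.one_apply] at h2
    exact mul_inv_eq_iff_eq_mul.mp h2.symm
  have hmapC : Subgroup.map C.subtype (_root_.commutator ↥C) ≤ _root_.commutator G := by
    rw [_root_.commutator_def, _root_.commutator_def, Subgroup.map_commutator]
    exact Subgroup.commutator_mono le_top le_top
  haveI hfinC : Finite (_root_.commutator ↥C) := by
    apply Finite.of_injective (fun x : ↥(_root_.commutator ↥C) =>
      (⟨((x : ↥C) : G), hmapC (Subgroup.mem_map_of_mem _ x.2)⟩ : ↥(_root_.commutator G)))
    intro a b hab
    have h' := Subtype.ext_iff.mp hab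
    exact Subtype.ext (Subtype.ext h')
  have hcentC : _root_.commutator ↥C ≤ Subgroup.center ↥C := by
    intro w hw
    rw [Subgroup.mem_center_iff]
    intro g
    apply Subtype.ext
    show (g : G) * w = (w : ↥C) * g
    have hwK : ((w : ↥C) : G) ∈ _root_.commutator G := hmapC (Subgroup.mem_map_of_mem _ hw)
    exact hCK (g : G) g.2 _ hwK
  obtain ⟨ι, hι, A, hAcomm, hAsup⟩ :=
    FBA.abelian_gen (Nat.card (_root_.commutator ↥C)) ↥C hfinC le_rfl hcentC
  haveI := hι
  set Afam : ι ⊕ (G ⧸ C) → Subgroup G :=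
    Sum.elim (fun i => (A i).map C.subtype) (fun q => Subgroup.zpowers q.out) with hAfamdef
  have hcomm : ∀ j, IsMulCommutative (Afam j) := by
    rintro (i | q)
    · haveI := hAcomm i
      exact Subgroup.map_isMulCommutative _ _
    · exact Subgroup.zpowers_isMulCommutative _
  have hCle : C ≤ ⨆ j, Afam j := by
    have e1 : Subgroup.map C.subtype ⊤ = C := by
      rw [← MonoidHom.range_eq_map, Subgroup.range_subtype]
    have e2 : (⨆ i : ι, (A i).map C.subtype) = C := by
      rw [← (Subgroup.gc_map_comap C.subtype).l_iSup, hAsup]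
      exact e1
    exact le_trans (le_of_eq e2.symm) (iSup_le fun i => le_iSup Afam (Sum.inl i))
  have hsup : (⨆ j, Afam j) = ⊤ := by
    rw [Subgroup.eq_top_iff']
    intro g
    have h1 : (QuotientGroup.mk g : G ⧸ C).out⁻¹ * g ∈ C := by
      apply (QuotientGroup.eq_one_iff _).mp
      rw [QuotientGroup.mk_mul, QuotientGroup.mk_inv, QuotientGroup.out_eq']
      exact inv_mul_cancel _
    have h3 : (QuotientGroup.mk g : G ⧸ C).out ∈ ⨆ j, Afam j :=
      SetLike.le_def.mp (le_iSup Afam (Sum.inr (QuotientGroup.mk g)))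
        (Subgroup.mem_zpowers _)
    have h4 := Subgroup.mul_mem _ h3 (hCle h1)
    simpa using h4
  obtain ⟨m, ⟨e⟩⟩ := Finite.exists_equiv_fin (ι ⊕ (G ⧸ C))
  refine ⟨m, Afam ∘ e.symm, fun i => hcomm _, ?_⟩
  rw [← hsup]
  exact e.symm.iSup_comp (g := Afam)
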